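/- Define τ_0,…,τ_{n+r-1} ∈ R by (1 + γ_{n-1}t + γ_{n-2}t^2 + ⋯ + γ_{n-r_1}t^{r_1})·(1 + b_{r-1}t + ⋯ + b_0 t^r)^{q_1+1} ≡ 1 + τ_{n+r-1}t + τ_{n+r-2}t^2 + ⋯ + τ_0 t^{n+r} (mod t^{n+r+1}) in R[[t]]. Then for every 0 ≤ i ≤ n+r−1, the difference c_i − τ_i lies in the ideal of R generated by ψ_0,…,ψ_{q_1r-1}. -/

import Mathlib

open MvPolynomial Matrix

noncomputable section

namespace TB

/-- The polynomial ring `ℂ[a_0,…,a_{n-1},b_0,…,b_{r-1}]`: variable `Sum.inl i` is `a_i`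
and `Sum.inr j` is `b_j`. -/
abbrev R (n r : ℕ) : Type := MvPolynomial (Fin n ⊕ Fin r) ℂ

/-- The power series `1 + (cf 1)·t + ⋯ + (cf m)·t^m`. -/
def ser {A : Type*} [CommRing A] (m : ℕ) (cf : ℕ → A) : PowerSeries A :=
  PowerSeries.mk fun k => if k = 0 then 1 else if k ≤ m then cf k else 0

/-- `1 + a_{n-1} t + ⋯ + a_0 t^n`. -/
def Aser (n r : ℕ) : PowerSeries (R n r) :=
  ser n fun k => if h : 1 ≤ k ∧ k ≤ n then X (Sum.inl ⟨n - k, by omega⟩) else 0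

/-- `1 + b_{r-1} t + ⋯ + b_0 t^r`. -/
def Bser (n r : ℕ) : PowerSeries (R n r) :=
  ser r fun k => if h : 1 ≤ k ∧ k ≤ r then X (Sum.inr ⟨r - k, by omega⟩) else 0

/-- `1 + d_{n-1} t + ⋯ + d_0 t^n`. -/
def Dser (n r : ℕ) (d : Fin n → R n r) : PowerSeries (R n r) :=
  ser n fun k => if h : 1 ≤ k ∧ k ≤ n then d ⟨n - k, by omega⟩ else 0

/-- `1 + d_{n-1} t + ⋯ + d_1 t^{n-1}`. -/
def Dhatser (n r : ℕ) (d : Fin n → R n r) : PowerSeries (R n r) :=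
  ser (n - 1) fun k => if h : 1 ≤ k ∧ k ≤ n - 1 then d ⟨n - k, by omega⟩ else 0

/-- `f(x) = x^n + a_{n-1}x^{n-1} + ⋯ + a_0`. -/
def fpoly (n r : ℕ) : Polynomial (R n r) :=
  Polynomial.X ^ n + ∑ i : Fin n, Polynomial.C (X (Sum.inl i)) * Polynomial.X ^ (i : ℕ)

/-- `g(x) = x^r + b_{r-1}x^{r-1} + ⋯ + b_0`. -/
def gpoly (n r : ℕ) : Polynomial (R n r) :=
  Polynomial.X ^ r + ∑ j : Fin r, Polynomial.C (X (Sum.inr j)) * Polynomial.X ^ (j : ℕ)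

/-- The coefficient `c_k` of `f·g`, for `0 ≤ k ≤ n+r-1`. -/
def cc (n r : ℕ) (k : Fin (n + r)) : R n r := (fpoly n r * gpoly n r).coeff (k : ℕ)

/-- `d_0, …, d_{n-1}` are the unique polynomials with
`(1 + b_{r-1}t + ⋯ + b_0 t^r)(1 + d_{n-1}t + ⋯ + d_0 t^n) ≡ 1 + a_{n-1}t + ⋯ + a_0 t^n (mod t^{n+1})`. -/
def dSpec (n r : ℕ) (d : Fin n → R n r) : Prop :=
  ∀ k ≤ n, PowerSeries.coeff k (Bser n r * Dser n r d)
    = PowerSeries.coeff k (Aser n r)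

/-- `ψ_i = d_i` for `0 ≤ i ≤ r-1`, and
`ψ_{s·r+i} = ∂^s d_{r-1} / (∂b_0^{s-1} ∂b_{r-1-i})` for `s ≥ 1`, `0 ≤ i ≤ r-1`. -/
def psi (n r : ℕ) (hr : 0 < r) (hrn : r ≤ n) (d : Fin n → R n r) (m : ℕ) : R n r :=
  if h : m < r then d ⟨m, by omega⟩
  else
    (fun q => pderiv (Sum.inr (⟨0, hr⟩ : Fin r)) q)^[m / r - 1]
      (pderiv (Sum.inr (⟨r - 1 - m % r, by omega⟩ : Fin r)) (d ⟨r - 1, by omega⟩))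

/-- The `m×m` lower shift matrix over `R n r`. -/
def Lmat (n r m : ℕ) : Matrix (Fin m) (Fin m) (R n r) :=
  Matrix.of fun i j => if (i : ℕ) = (j : ℕ) + 1 then 1 else 0

/-- `B = I_n + b_{r-1}L_n + ⋯ + b_0 L_n^r`. -/
def Bmat (n r : ℕ) (hr : 0 < r) : Matrix (Fin n) (Fin n) (R n r) :=
  1 + ∑ k ∈ Finset.range r, (X (Sum.inr (⟨r - 1 - k, by omega⟩ : Fin r)) : R n r) • Lmat n r n ^ (k + 1)

/-- `D̂ = I_n + d_{n-1}L_n + ⋯ + d_1 L_n^{n-1}`. -/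
def Dhat (n r : ℕ) (hn : 0 < n) (d : Fin n → R n r) : Matrix (Fin n) (Fin n) (R n r) :=
  1 + ∑ k ∈ Finset.range (n - 1), d ⟨n - 1 - k, by omega⟩ • Lmat n r n ^ (k + 1)

/-- `D`: the first `r` columns of `D̂`. -/
def Dmat (n r : ℕ) (hn : 0 < n) (hrn : r ≤ n) (d : Fin n → R n r) :
    Matrix (Fin n) (Fin r) (R n r) :=
  (Dhat n r hn d).submatrix id (Fin.castLE hrn)

/-- `Â = I_n + a_{n-1}L_n + ⋯ + a_1 L_n^{n-1}`. -/
def Ahat (n r : ℕ) (hn : 0 < n) : Matrix (Fin n) (Fin n) (R n r) :=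
  1 + ∑ k ∈ Finset.range (n - 1),
    (X (Sum.inl (⟨n - 1 - k, by omega⟩ : Fin n)) : R n r) • Lmat n r n ^ (k + 1)

/-- `A`: the first `r` columns of `Â`. -/
def Amat (n r : ℕ) (hn : 0 < n) (hrn : r ≤ n) : Matrix (Fin n) (Fin r) (R n r) :=
  (Ahat n r hn).submatrix id (Fin.castLE hrn)

/-- The Jacobian matrix of a family `p` of elements of `R n r`: the row of index `i` is
`(∂p_i/∂a_{n-1}, …, ∂p_i/∂a_0, ∂p_i/∂b_{r-1}, …, ∂p_i/∂b_0)`. -/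
def jac {n r : ℕ} {ι : Type*} (p : ι → R n r) : Matrix ι (Fin (n + r)) (R n r) :=
  Matrix.of fun i j =>
    if h : (j : ℕ) < n then pderiv (Sum.inl (⟨n - 1 - (j : ℕ), by omega⟩ : Fin n)) (p i)
    else
      pderiv (Sum.inr (⟨r - 1 - ((j : ℕ) - n), by have := j.isLt; omega⟩ : Fin r)) (p i)

/-- The set of all `k×k` minors of a matrix. -/
def minorsSet {n r : ℕ} {ι : Type*} (k : ℕ) (M : Matrix ι (Fin (n + r)) (R n r)) :
    Set (R n r) :=
  { x | ∃ (ri : Fin k → ι) (ci : Fin k → Fin (n + r)), x = (M.submatrix ri ci).det }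

/-- Evaluation at the origin `a_i = b_j = 0`. -/
def ev0 (n r : ℕ) : R n r →+* ℂ := eval fun _ => 0

/-- The maximal ideal `(a_0,…,a_{n-1},b_0,…,b_{r-1})`. -/
def mIdeal (n r : ℕ) : Ideal (R n r) :=
  Ideal.span (Set.range (X : (Fin n ⊕ Fin r) → R n r))

/-- `1 + g_1 t + ⋯ + g_{r_1} t^{r_1}` over `S = ℂ[g_1,…,g_{r_1},b_0,…,b_{r-1}] = R r1 r`,
where `g_k` is the variable `Sum.inl ⟨k-1⟩`. -/
def Gser (r1 r : ℕ) : PowerSeries (R r1 r) :=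
  ser r1 fun k => if h : 1 ≤ k ∧ k ≤ r1 then X (Sum.inl ⟨k - 1, by omega⟩) else 0

/-- `1 + w_{r-1} t + ⋯ + w_0 t^r`. -/
def Wser (r1 r : ℕ) (w : Fin r → R r1 r) : PowerSeries (R r1 r) :=
  ser r fun k => if h : 1 ≤ k ∧ k ≤ r then w ⟨r - k, by omega⟩ else 0

/-- `1 + w_{r-1} t + ⋯ + w_1 t^{r-1}`. -/
def Whatser (r1 r : ℕ) (w : Fin r → R r1 r) : PowerSeries (R r1 r) :=
  ser (r - 1) fun k => if h : 1 ≤ k ∧ k ≤ r - 1 then w ⟨r - k, by omega⟩ else 0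

/-- `w_0,…,w_{r-1}` are the unique polynomials with
`(1 + g_1 t + ⋯ + g_{r_1}t^{r_1})(1 + w_{r-1}t + ⋯ + w_0 t^r) ≡ 1 + b_{r-1}t + ⋯ + b_0 t^r
(mod t^{r+1})`. -/
def wSpec (r1 r : ℕ) (w : Fin r → R r1 r) : Prop :=
  ∀ k ≤ r, PowerSeries.coeff k (Gser r1 r * Wser r1 r w)
    = PowerSeries.coeff k (Bser r1 r)

/-- `φ'_i = w_i` for `0 ≤ i ≤ r_1-1`, and
`φ'_{s·r_1+i} = ∂^s w_{r_1-1} / (∂g_{r_1}^{s-1} ∂g_{1+i})` for `s ≥ 1`, `0 ≤ i ≤ r_1-1`. -/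
def phi' (r1 r : ℕ) (h1 : 0 < r1) (h2 : r1 < r) (w : Fin r → R r1 r) (m : ℕ) : R r1 r :=
  if h : m < r1 then w ⟨m, by omega⟩
  else
    (fun q => pderiv (Sum.inl (⟨r1 - 1, by omega⟩ : Fin r1)) q)^[m / r1 - 1]
      (pderiv (Sum.inl (⟨m % r1, Nat.mod_lt m h1⟩ : Fin r1)) (w ⟨r1 - 1, by omega⟩))

/-- The substitution `g_k ↦ γ_{n-k}`, `b_j ↦ b_j`, from `S = R r1 r` to `R n r`. -/
def subst (n r r1 : ℕ) (γ : ℕ → R n r) : R r1 r →ₐ[ℂ] R n r :=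
  aeval (Sum.elim (fun i : Fin r1 => γ (n - ((i : ℕ) + 1))) fun j : Fin r => X (Sum.inr j))


/-- From `n = q_1·r + r_1` with `q_1 ≥ 1` we get `r ≤ n`. -/
theorem rle (q1 r r1 n : ℕ) (hq1 : 1 ≤ q1) (hn : n = q1 * r + r1) : r ≤ n := by
  have := Nat.le_mul_of_pos_left r hq1
  omega


section Aux

variable {n r : ℕ}

lemma coeff_ser {A : Type*} [CommRing A] (m : ℕ) (cf : ℕ → A) (k : ℕ) :
    PowerSeries.coeff k (ser m cf) = if k = 0 then 1 else if k ≤ m then cf k else 0 := by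
  simp [ser]

/-- coefficientwise partial derivative of a power series -/
def pdS (v : Fin n ⊕ Fin r) (F : PowerSeries (R n r)) : PowerSeries (R n r) :=
  PowerSeries.mk fun k => pderiv v (PowerSeries.coeff k F)

lemma coeff_pdS (v : Fin n ⊕ Fin r) (F : PowerSeries (R n r)) (k : ℕ) :
    PowerSeries.coeff k (pdS v F) = pderiv v (PowerSeries.coeff k F) := by
  simp [pdS]

lemma pdS_mul (v : Fin n ⊕ Fin r) (F G : PowerSeries (R n r)) :
    pdS v (F * G) = pdS v F * G + F * pdS v G := by
  ext k
  simp only [coeff_pdS, PowerSeries.coeff_mul, map_add, map_sum, pderiv_mul, coeff_pdS,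
    Finset.sum_add_distrib]

end Aux
section Aux2

variable {n r : ℕ}

lemma pdS_Bser (hrn : r ≤ n) (j : Fin r) :
    pdS (Sum.inr j) (Bser n r) = (PowerSeries.X : PowerSeries (R n r)) ^ (r - (j : ℕ)) := by
  ext k
  rw [coeff_pdS, PowerSeries.coeff_X_pow]
  rcases eq_or_ne k 0 with rfl | hk0
  · have : (0:ℕ) ≠ r - j := by have := j.isLt; omega
    simp [Bser, coeff_ser, this]
  · rw [Bser, coeff_ser, if_neg hk0]
    by_cases hk : k ≤ r
    · rw [if_pos hk]
      rw [dif_pos ⟨Nat.one_le_iff_ne_zero.2 hk0, hk⟩]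
      by_cases he : k = r - (j:ℕ)
      · rw [if_pos he]
        have : (⟨r - k, by omega⟩ : Fin r) = j := by
          have := j.isLt; apply Fin.ext; simp; omega
        rw [this, pderiv_X_self]
      · rw [if_neg he]
        have : (⟨r - k, by omega⟩ : Fin r) ≠ j := by
          have := j.isLt
          intro h
          apply he
          have : r - k = (j:ℕ) := congrArg Fin.val h
          omega
        rw [pderiv_X_of_ne (fun h => this (Sum.inr_injective h))]
    · rw [if_neg hk]
      have : k ≠ r - (j:ℕ) := by have := j.isLt; omega
      simp [this]

lemma pdS_Aser (j : Fin r) : pdS (Sum.inr j) (Aser n r) = 0 := by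
  ext k
  rw [coeff_pdS, Aser, coeff_ser]
  rcases eq_or_ne k 0 with rfl | hk0
  · simp
  · rw [if_neg hk0]
    by_cases hk : k ≤ n
    · rw [if_pos hk, dif_pos ⟨Nat.one_le_iff_ne_zero.2 hk0, hk⟩, pderiv_X_of_ne (by simp)]
      simp
    · simp [hk]

lemma pdS_X_pow (v : Fin n ⊕ Fin r) (m : ℕ) :
    pdS v ((PowerSeries.X : PowerSeries (R n r)) ^ m) = 0 := by
  ext k
  rw [coeff_pdS, PowerSeries.coeff_X_pow]
  split <;> simp

lemma constantCoeff_Bser : PowerSeries.constantCoeff (Bser n r) = 1 := by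
  rw [← PowerSeries.coeff_zero_eq_constantCoeff, Bser, coeff_ser]; simp

lemma constantCoeff_Dser (d : Fin n → R n r) :
    PowerSeries.constantCoeff (Dser n r d) = 1 := by
  rw [← PowerSeries.coeff_zero_eq_constantCoeff, Dser, coeff_ser]; simp

end Aux2
section Aux3

variable {n r : ℕ}

lemma mul_coeff_mem_all (J : Ideal (R n r)) (F G : PowerSeries (R n r))
    (hG : ∀ j, PowerSeries.coeff j G ∈ J) (k : ℕ) :
    PowerSeries.coeff k (F * G) ∈ J := by
  rw [PowerSeries.coeff_mul]
  exact Ideal.sum_mem _ fun p _ => Ideal.mul_mem_left _ _ (hG p.2)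

lemma mul_coeff_mem (J : Ideal (R n r)) (F G : PowerSeries (R n r)) (dF m0 : ℕ)
    (hF : ∀ i, dF < i → PowerSeries.coeff i F = 0)
    (hG : ∀ j, m0 ≤ j → PowerSeries.coeff j G ∈ J) (k : ℕ) (hk : m0 + dF ≤ k) :
    PowerSeries.coeff k (F * G) ∈ J := by
  rw [PowerSeries.coeff_mul]
  refine Ideal.sum_mem _ fun p hp => ?_
  rw [Finset.HasAntidiagonal.mem_antidiagonal] at hp
  by_cases h : dF < p.1
  · rw [hF _ h, zero_mul]; exact J.zero_mem
  · exact Ideal.mul_mem_left _ _ (hG p.2 (by omega))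

end Aux3

section Main

variable (n r : ℕ) (hr : 0 < r) (hrn : r ≤ n) (d : Fin n → R n r)

/-- the ideal generated by `ψ_0, …, ψ_{k-1}` -/
def Ide (k : ℕ) : Ideal (R n r) :=
  Ideal.span (Set.range fun m : Fin k => psi n r hr hrn d (m : ℕ))

variable {n r d}

lemma psi_mem {k m : ℕ} (hm : m < k) : psi n r hr hrn d m ∈ Ide n r hr hrn d k :=
  Ideal.subset_span ⟨⟨m, hm⟩, rfl⟩

lemma Ide_mono {k k' : ℕ} (h : k ≤ k') : Ide n r hr hrn d k ≤ Ide n r hr hrn d k' := by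
  apply Ideal.span_mono
  rintro x ⟨m, rfl⟩
  exact ⟨⟨(m : ℕ), lt_of_lt_of_le m.isLt h⟩, rfl⟩

lemma smul_mem_iff (J : Ideal (R n r)) (c : ℂ) (hc : c ≠ 0) (x : R n r)
    (h : c • x ∈ J) : x ∈ J := by
  have : x = (algebraMap ℂ (R n r) c⁻¹) * (c • x) := by
    rw [Algebra.smul_def, ← mul_assoc, ← _root_.map_mul, inv_mul_cancel₀ hc, _root_.map_one, one_mul]
  rw [this]
  exact Ideal.mul_mem_left _ _ h

end Main
section Core

variable {n r : ℕ}

lemma pdS_add (v : Fin n ⊕ Fin r) (F G : PowerSeries (R n r)) :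
    pdS v (F + G) = pdS v F + pdS v G := by
  ext k; simp [coeff_pdS]

/-- `E = (A - B·D)/t^{n+1}` -/
def Eser (n r : ℕ) (d : Fin n → R n r) : PowerSeries (R n r) :=
  PowerSeries.mk fun m =>
    PowerSeries.coeff (n + 1 + m) (Aser n r - Bser n r * Dser n r d)

lemma coeff_Aser_high {k : ℕ} (hk : n < k) : PowerSeries.coeff k (Aser n r) = 0 := by
  rw [Aser, coeff_ser, if_neg (by omega), if_neg (by omega)]

lemma coeff_Bser_high {i : ℕ} (hi : r < i) : PowerSeries.coeff i (Bser n r) = 0 := by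
  rw [Bser, coeff_ser, if_neg (by omega), if_neg (by omega)]

lemma hAE (d : Fin n → R n r) (hd : dSpec n r d) :
    Aser n r = Bser n r * Dser n r d + PowerSeries.X ^ (n + 1) * Eser n r d := by
  refine PowerSeries.ext fun k => ?_
  rw [map_add, PowerSeries.coeff_X_pow_mul']
  by_cases hk : k ≤ n
  · rw [if_neg (by omega), add_zero]
    exact (hd k hk).symm
  · rw [if_pos (by omega), Eser, PowerSeries.coeff_mk, map_sub]
    have : n + 1 + (k - (n + 1)) = k := by omega
    rw [this]; ring

lemma Dcoeff_mem (hr : 0 < r) (hrn : r ≤ n) (d : Fin n → R n r) (j : ℕ) (hj : n + 1 ≤ j + r) :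
    PowerSeries.coeff j (Dser n r d) ∈ Ide n r hr hrn d r := by
  rw [Dser, coeff_ser]
  rcases eq_or_ne j 0 with rfl | hj0
  · omega
  · rw [if_neg hj0]
    by_cases hjn : j ≤ n
    · rw [if_pos hjn, dif_pos (show 1 ≤ j ∧ j ≤ n from ⟨by omega, hjn⟩)]
      have h1 : n - j < r := by omega
      have e : psi n r hr hrn d (n - j) = d ⟨n - j, by omega⟩ := by
        rw [psi, dif_pos h1]
      rw [← e]
      exact psi_mem hr hrn h1
    · rw [if_neg hjn]; exact Ideal.zero_mem _

lemma BD_high_mem (hr : 0 < r) (hrn : r ≤ n) (d : Fin n → R n r) (k : ℕ) (hk : n + 1 ≤ k) :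
    PowerSeries.coeff k (Bser n r * Dser n r d) ∈ Ide n r hr hrn d r :=
  mul_coeff_mem _ _ _ r (n + 1 - r) (fun _ hi => coeff_Bser_high hi)
    (fun j hj => Dcoeff_mem hr hrn d j (by omega)) k (by omega)

lemma E_mem (hr : 0 < r) (hrn : r ≤ n) (d : Fin n → R n r) (m : ℕ) :
    PowerSeries.coeff m (Eser n r d) ∈ Ide n r hr hrn d r := by
  rw [Eser, PowerSeries.coeff_mk, map_sub, coeff_Aser_high (by omega), zero_sub]
  exact neg_mem (BD_high_mem hr hrn d _ (by omega))

lemma pdS_D_eq (hrn : r ≤ n) (d : Fin n → R n r) (hd : dSpec n r d)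
    (Binv : PowerSeries (R n r)) (hBinv : Bser n r * Binv = 1) (j : Fin r) :
    pdS (Sum.inr j) (Dser n r d) =
      -(PowerSeries.X ^ (r - (j : ℕ)) * (Binv * Dser n r d))
        - PowerSeries.X ^ (n + 1) * (Binv * pdS (Sum.inr j) (Eser n r d)) := by
  have h0 := congrArg (pdS (Sum.inr j)) (hAE d hd)
  rw [pdS_Aser, pdS_add, pdS_mul, pdS_mul, pdS_Bser hrn, pdS_X_pow, zero_mul] at h0
  linear_combination (-Binv) * h0 - pdS (Sum.inr j) (Dser n r d) * hBinv

lemma dD (hrn : r ≤ n) (d : Fin n → R n r) (hd : dSpec n r d)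
    (Binv : PowerSeries (R n r)) (hBinv : Bser n r * Binv = 1) (j : Fin r) (k : ℕ) (hk : k ≤ n) :
    pderiv (Sum.inr j) (PowerSeries.coeff k (Dser n r d)) =
      -(PowerSeries.coeff k
        (PowerSeries.X ^ (r - (j : ℕ)) * (Binv * Dser n r d))) := by
  have h := congrArg (PowerSeries.coeff k) (pdS_D_eq hrn d hd Binv hBinv j)
  rw [coeff_pdS, map_sub, map_neg, PowerSeries.coeff_X_pow_mul' _ (n+1),
    if_neg (by omega)] at h
  rw [h]; ring

lemma dsym (hr : 0 < r) (hrn : r ≤ n) (d : Fin n → R n r) (hd : dSpec n r d)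
    (Binv : PowerSeries (R n r)) (hBinv : Bser n r * Binv = 1) (m : ℕ) (hm : m < r) :
    pderiv (Sum.inr (⟨0, hr⟩ : Fin r)) (d ⟨m, by omega⟩) =
      pderiv (Sum.inr (⟨r - 1 - m, by omega⟩ : Fin r)) (d ⟨r - 1, by omega⟩) := by
  have hmn : m < n := by omega
  have e1 : PowerSeries.coeff (n - m) (Dser n r d) = d ⟨m, by omega⟩ := by
    rw [Dser, coeff_ser, if_neg (by omega), if_pos (by omega),
      dif_pos (show 1 ≤ n - m ∧ n - m ≤ n from by omega)]
    congr 1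
    exact Fin.ext (by simp only [Fin.val_mk]; omega)
  have e2 : PowerSeries.coeff (n - r + 1) (Dser n r d) = d ⟨r - 1, by omega⟩ := by
    rw [Dser, coeff_ser, if_neg (by omega), if_pos (by omega),
      dif_pos (show 1 ≤ n - r + 1 ∧ n - r + 1 ≤ n from by omega)]
    congr 1
    exact Fin.ext (by simp only [Fin.val_mk]; omega)
  have t1 := dD hrn d hd Binv hBinv ⟨0, hr⟩ (n - m) (by omega)
  have t2 := dD hrn d hd Binv hBinv ⟨r - 1 - m, by omega⟩ (n - r + 1) (by omega)
  rw [e1, show ((⟨0, hr⟩ : Fin r) : ℕ) = 0 from rfl] at t1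
  rw [e2, show ((⟨r - 1 - m, by omega⟩ : Fin r) : ℕ) = r - 1 - m from rfl] at t2
  rw [t1, t2, PowerSeries.coeff_X_pow_mul', PowerSeries.coeff_X_pow_mul']
  by_cases hc : r ≤ n - m
  · rw [if_pos (by omega), if_pos (by omega)]
    have : n - m - (r - 0) = n - r + 1 - (r - (r - 1 - m)) := by omega
    rw [this]
  · rw [if_neg (by omega), if_neg (by omega)]

lemma psi_pd (hr : 0 < r) (hrn : r ≤ n) (d : Fin n → R n r) (hd : dSpec n r d)
    (Binv : PowerSeries (R n r)) (hBinv : Bser n r * Binv = 1) (m : ℕ) :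
    pderiv (Sum.inr (⟨0, hr⟩ : Fin r)) (psi n r hr hrn d m) = psi n r hr hrn d (m + r) := by
  by_cases hm : m < r
  · rw [psi, dif_pos hm, psi, dif_neg (by omega)]
    have hdiv : (m + r) / r - 1 = 0 := by
      rw [Nat.add_div_right _ hr, Nat.div_eq_of_lt hm]
    have hmod : (m + r) % r = m := by
      rw [Nat.add_mod_right, Nat.mod_eq_of_lt hm]
    have hfin : (⟨r - 1 - (m + r) % r, by omega⟩ : Fin r) = ⟨r - 1 - m, by omega⟩ :=
      Fin.ext (by simp only [Fin.val_mk]; omega)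
    rw [hdiv, hfin, Function.iterate_zero_apply]
    exact dsym hr hrn d hd Binv hBinv m hm
  · rw [psi, dif_neg hm, psi, dif_neg (by omega)]
    have hdiv : (m + r) / r - 1 = (m / r - 1) + 1 := by
      rw [Nat.add_div_right _ hr]
      have : 1 ≤ m / r := (Nat.one_le_div_iff hr).2 (by omega)
      omega
    have hfin : (⟨r - 1 - (m + r) % r, by omega⟩ : Fin r) = ⟨r - 1 - m % r, by omega⟩ :=
      Fin.ext (by simp only [Fin.val_mk, Nat.add_mod_right])
    rw [hdiv, hfin, Function.iterate_succ_apply']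

lemma pd_mem (hr : 0 < r) (hrn : r ≤ n) (d : Fin n → R n r) (hd : dSpec n r d)
    (Binv : PowerSeries (R n r)) (hBinv : Bser n r * Binv = 1) {k : ℕ} {x : R n r}
    (hx : x ∈ Ide n r hr hrn d k) :
    pderiv (Sum.inr (⟨0, hr⟩ : Fin r)) x ∈ Ide n r hr hrn d (k + r) := by
  have main : x ∈ Ide n r hr hrn d (k + r) ∧
      pderiv (Sum.inr (⟨0, hr⟩ : Fin r)) x ∈ Ide n r hr hrn d (k + r) := by
    refine Submodule.span_induction ?_ ?_ ?_ ?_ hx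
    · rintro y ⟨m, rfl⟩
      refine ⟨psi_mem hr hrn (by omega), ?_⟩
      show pderiv _ (psi n r hr hrn d (m : ℕ)) ∈ _
      rw [psi_pd hr hrn d hd Binv hBinv]
      exact psi_mem hr hrn (by omega)
    · simp
    · rintro x y hx hy ⟨hx1, hx2⟩ ⟨hy1, hy2⟩
      exact ⟨Ideal.add_mem _ hx1 hy1, by rw [map_add]; exact Ideal.add_mem _ hx2 hy2⟩
    · rintro a x hx ⟨hx1, hx2⟩
      refine ⟨Ideal.mul_mem_left _ _ hx1, ?_⟩
      rw [smul_eq_mul, pderiv_mul]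
      exact Ideal.add_mem _ (Ideal.mul_mem_left _ _ hx1) (Ideal.mul_mem_left _ _ hx2)
  exact main.2

end Core
section Key

variable {n r : ℕ}

/-- complex constant as a power series -/
def Kc (n r : ℕ) (c : ℂ) : PowerSeries (R n r) :=
  PowerSeries.C (MvPolynomial.C c)

lemma Kc_add_one (c : ℂ) : Kc n r (c + 1) = Kc n r c + 1 := by
  simp [Kc, map_add]

lemma coeff_Kc_mul (c : ℂ) (F : PowerSeries (R n r)) (k : ℕ) :
    PowerSeries.coeff k (Kc n r c * F) = MvPolynomial.C c * PowerSeries.coeff k F := by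
  rw [Kc, PowerSeries.coeff_C_mul]

lemma pdS_one (v : Fin n ⊕ Fin r) : pdS v (1 : PowerSeries (R n r)) = 0 := by
  refine PowerSeries.ext fun k => ?_
  rw [coeff_pdS, PowerSeries.coeff_one]
  split <;> simp

lemma pdS_Binv (hr : 0 < r) (hrn : r ≤ n)
    (Binv : PowerSeries (R n r)) (hBinv : Bser n r * Binv = 1) :
    pdS (Sum.inr (⟨0, hr⟩ : Fin r)) Binv = -(Binv ^ 2 * PowerSeries.X ^ r) := by
  have h := congrArg (pdS (Sum.inr (⟨0, hr⟩ : Fin r))) hBinv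
  rw [pdS_one, pdS_mul, pdS_Bser hrn, show ((⟨0, hr⟩ : Fin r) : ℕ) = 0 from rfl,
    Nat.sub_zero] at h
  linear_combination Binv * h - pdS (Sum.inr (⟨0, hr⟩ : Fin r)) Binv * hBinv

lemma pdS_Binv_pow (hr : 0 < r) (hrn : r ≤ n)
    (Binv : PowerSeries (R n r)) (hBinv : Bser n r * Binv = 1) (s : ℕ) :
    pdS (Sum.inr (⟨0, hr⟩ : Fin r)) (Binv ^ s) =
      -(Kc n r (s : ℂ) * (Binv ^ (s + 1) * PowerSeries.X ^ r)) := by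
  induction s with
  | zero => simp [pdS_one, Kc]
  | succ s ih =>
      rw [pow_succ, pdS_mul, ih, pdS_Binv hr hrn Binv hBinv,
        show ((s + 1 : ℕ) : ℂ) = (s : ℂ) + 1 by push_cast; ring, Kc_add_one]
      ring

lemma Ustep (hr : 0 < r) (hrn : r ≤ n) (d : Fin n → R n r) (hd : dSpec n r d)
    (Binv : PowerSeries (R n r)) (hBinv : Bser n r * Binv = 1) (s : ℕ) :
    Kc n r ((s + 1 : ℕ) : ℂ) * (PowerSeries.X ^ r * (Binv ^ (s + 1) * Dser n r d)) =
      -(pdS (Sum.inr (⟨0, hr⟩ : Fin r)) (Binv ^ s * Dser n r d))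
        - PowerSeries.X ^ (n + 1)
          * (Binv ^ (s + 1) * pdS (Sum.inr (⟨0, hr⟩ : Fin r)) (Eser n r d)) := by
  rw [pdS_mul, pdS_Binv_pow hr hrn Binv hBinv,
    pdS_D_eq hrn d hd Binv hBinv ⟨0, hr⟩,
    show ((⟨0, hr⟩ : Fin r) : ℕ) = 0 from rfl, Nat.sub_zero,
    show ((s + 1 : ℕ) : ℂ) = (s : ℂ) + 1 by push_cast; ring, Kc_add_one]
  ring

lemma keyC (hr : 0 < r) (hrn : r ≤ n) (d : Fin n → R n r) (hd : dSpec n r d)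
    (Binv : PowerSeries (R n r)) (hBinv : Bser n r * Binv = 1) (s : ℕ) :
    ∀ j : ℕ, n + 1 ≤ j + (s + 1) * r →
      PowerSeries.coeff j (Binv ^ s * Dser n r d) ∈ Ide n r hr hrn d ((s + 1) * r) := by
  induction s with
  | zero =>
      intro j hj
      rw [pow_zero, one_mul, show (0 + 1) * r = r from by ring]
      exact Dcoeff_mem hr hrn d j (by omega)
  | succ s ih =>
      intro j hj
      have hU := congrArg (PowerSeries.coeff (j + r))
        (Ustep hr hrn d hd Binv hBinv s)
      rw [coeff_Kc_mul, PowerSeries.coeff_X_pow_mul, map_sub, map_neg, coeff_pdS] at hU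
      have hmem : MvPolynomial.C ((s + 1 : ℕ) : ℂ)
          * PowerSeries.coeff j (Binv ^ (s + 1) * Dser n r d)
          ∈ Ide n r hr hrn d ((s + 2) * r) := by
        rw [hU]
        refine Submodule.sub_mem _ (neg_mem ?_) ?_
        · have e : (s + 1 + 1) * r = (s + 1) * r + r := by ring
          have h1 := ih (j + r) (by omega)
          have h2 := pd_mem hr hrn d hd Binv hBinv h1
          have h3 : (s + 1) * r + r = (s + 2) * r := by ring
          rwa [h3] at h2
        · rw [PowerSeries.coeff_X_pow_mul']
          split
          · refine mul_coeff_mem_all _ _ _ (fun m => ?_) _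
            rw [coeff_pdS]
            have h1 := pd_mem hr hrn d hd Binv hBinv (E_mem hr hrn d m)
            refine Ide_mono hr hrn ?_ h1
            calc r + r = 2 * r := by ring
              _ ≤ (s + 2) * r := Nat.mul_le_mul_right r (by omega)
          · exact Ideal.zero_mem _
      have hx := smul_mem_iff (Ide n r hr hrn d ((s + 2) * r)) ((s + 1 : ℕ) : ℂ)
        (by exact_mod_cast Nat.succ_ne_zero s)
        (PowerSeries.coeff j (Binv ^ (s + 1) * Dser n r d))
        (by rw [Algebra.smul_def, MvPolynomial.algebraMap_eq]; exact hmem)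
      have h4 : (s + 1 + 1) * r = (s + 2) * r := by ring
      rwa [h4]
end Key
section Rev

variable {n r : ℕ}

lemma fpoly_eq : fpoly n r = Polynomial.X ^ n
    + ∑ i : Fin n, Polynomial.C (X (Sum.inl i) : R n r) * Polynomial.X ^ (i : ℕ) := rfl

lemma natDegree_fpoly : (fpoly n r).natDegree = n := by
  apply Polynomial.natDegree_eq_of_degree_eq_some
  rw [fpoly_eq, Polynomial.degree_add_eq_left_of_degree_lt, Polynomial.degree_X_pow]
  rw [Polynomial.degree_X_pow]
  exact Polynomial.degree_sum_fin_lt _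

lemma monic_fpoly : (fpoly n r).Monic := by
  apply Polynomial.monic_X_pow_add
  simpa using Polynomial.degree_sum_fin_lt (fun i : Fin n => (X (Sum.inl i) : R n r))

lemma natDegree_gpoly : (gpoly n r).natDegree = r := by
  apply Polynomial.natDegree_eq_of_degree_eq_some
  rw [gpoly, Polynomial.degree_add_eq_left_of_degree_lt, Polynomial.degree_X_pow]
  rw [Polynomial.degree_X_pow]
  exact Polynomial.degree_sum_fin_lt _

lemma monic_gpoly : (gpoly n r).Monic := by
  apply Polynomial.monic_X_pow_add
  simpa using Polynomial.degree_sum_fin_lt (fun j : Fin r => (X (Sum.inr j) : R n r))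

lemma coeff_fpoly (m : ℕ) : (fpoly n r).coeff m =
    if h : m < n then X (Sum.inl ⟨m, h⟩) else if m = n then 1 else 0 := by
  rw [fpoly_eq, Polynomial.coeff_add, Polynomial.coeff_X_pow, Polynomial.finset_sum_coeff]
  simp only [Polynomial.coeff_C_mul, Polynomial.coeff_X_pow]
  by_cases h : m < n
  · rw [dif_pos h, if_neg (by omega)]
    rw [Finset.sum_eq_single (⟨m, h⟩ : Fin n)]
    · simp
    · intro b _ hb
      rw [if_neg (fun he => hb (Fin.ext (by simpa using he.symm))), mul_zero]
    · simp
  · rw [dif_neg h]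
    rw [Finset.sum_eq_zero (fun b _ => by rw [if_neg (by omega), mul_zero]), add_zero]

lemma coeff_gpoly (m : ℕ) : (gpoly n r).coeff m =
    if h : m < r then X (Sum.inr ⟨m, h⟩) else if m = r then 1 else 0 := by
  rw [gpoly, Polynomial.coeff_add, Polynomial.coeff_X_pow, Polynomial.finset_sum_coeff]
  simp only [Polynomial.coeff_C_mul, Polynomial.coeff_X_pow]
  by_cases h : m < r
  · rw [dif_pos h, if_neg (by omega)]
    rw [Finset.sum_eq_single (⟨m, h⟩ : Fin r)]
    · simp
    · intro b _ hb
      rw [if_neg (fun he => hb (Fin.ext (by simpa using he.symm))), mul_zero]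
    · simp
  · rw [dif_neg h]
    rw [Finset.sum_eq_zero (fun b _ => by rw [if_neg (by omega), mul_zero]), add_zero]

lemma rev_fpoly : ((fpoly n r).reverse : PowerSeries (R n r)) = Aser n r := by
  refine PowerSeries.ext fun k => ?_
  rw [Polynomial.coeff_coe, Polynomial.coeff_reverse, natDegree_fpoly, Aser, coeff_ser]
  by_cases hk : k ≤ n
  · rw [Polynomial.revAt_le hk, coeff_fpoly]
    rcases eq_or_ne k 0 with rfl | hk0
    · rw [if_pos rfl, dif_neg (by omega), if_pos (by omega)]
    · rw [if_neg hk0, if_pos hk, dif_pos (show n - k < n by omega),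
        dif_pos (show 1 ≤ k ∧ k ≤ n from ⟨by omega, hk⟩)]
  · rw [Polynomial.revAt_eq_self_of_lt (show n < k by omega),
      coeff_fpoly, dif_neg (show ¬ k < n by omega), if_neg (show ¬ k = n by omega),
      if_neg (show ¬ k = 0 by omega), if_neg hk]

lemma rev_gpoly : ((gpoly n r).reverse : PowerSeries (R n r)) = Bser n r := by
  refine PowerSeries.ext fun k => ?_
  rw [Polynomial.coeff_coe, Polynomial.coeff_reverse, natDegree_gpoly, Bser, coeff_ser]
  by_cases hk : k ≤ r
  · rw [Polynomial.revAt_le hk, coeff_gpoly]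
    rcases eq_or_ne k 0 with rfl | hk0
    · rw [if_pos rfl, dif_neg (by omega), if_pos (by omega)]
    · rw [if_neg hk0, if_pos hk, dif_pos (show r - k < r by omega),
        dif_pos (show 1 ≤ k ∧ k ≤ r from ⟨by omega, hk⟩)]
  · rw [Polynomial.revAt_eq_self_of_lt (show r < k by omega),
      coeff_gpoly, dif_neg (show ¬ k < r by omega), if_neg (show ¬ k = r by omega),
      if_neg (show ¬ k = 0 by omega), if_neg hk]

lemma cc_eq (i : Fin (n + r)) :
    cc n r i = PowerSeries.coeff ((n + r) - (i : ℕ)) (Aser n r * Bser n r) := by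
  have hrev : ((fpoly n r * gpoly n r).reverse : PowerSeries (R n r))
      = Aser n r * Bser n r := by
    rw [Polynomial.reverse_mul_of_domain, Polynomial.coe_mul, rev_fpoly, rev_gpoly]
  rw [← hrev, Polynomial.coeff_coe, Polynomial.coeff_reverse, cc]
  congr 1
  rw [Polynomial.natDegree_mul (monic_fpoly.ne_zero) (monic_gpoly.ne_zero),
    natDegree_fpoly, natDegree_gpoly,
    Polynomial.revAt_le (show n + r - (i : ℕ) ≤ n + r by omega)]
  have := i.isLt
  omega

end Rev

/-- Lemma 3.16: with `τ` defined by
`(1 + γ_{n-1}t + ⋯ + γ_{n-r_1}t^{r_1})·(1 + b_{r-1}t + ⋯ + b_0t^r)^{q_1+1}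
≡ 1 + τ_{n+r-1}t + ⋯ + τ_0 t^{n+r} (mod t^{n+r+1})`, one has
`c_i ≡ τ_i (mod (ψ_0,…,ψ_{q_1r-1}))` for all `0 ≤ i ≤ n+r-1`. -/
theorem stmt19 (n r q1 r1 : ℕ) (hq1 : 1 ≤ q1) (h1 : 0 < r1) (h2 : r1 < r)
    (hn : n = q1 * r + r1)
    (d : Fin n → R n r) (hd : dSpec n r d)
    (Binv : PowerSeries (R n r)) (hBinv : Bser n r * Binv = 1)
    (γ : ℕ → R n r)
    (hγ : ∀ k, 1 ≤ k → k ≤ r1 →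
      γ (n - k) = PowerSeries.coeff k (Binv ^ q1 * Aser n r)) :
    ∀ i : Fin (n + r),
      cc n r i - PowerSeries.coeff ((n + r) - (i : ℕ))
          (ser r1 (fun k => γ (n - k)) * Bser n r ^ (q1 + 1)) ∈
        Ideal.span (Set.range fun m : Fin (q1 * r) =>
          psi n r (by omega) (rle q1 r r1 n (by omega) hn) d (m : ℕ)) := by
  intro i
  have hr : 0 < r := by omega
  have hrn : r ≤ n := rle q1 r r1 n (by omega) hn
  suffices h : cc n r i - PowerSeries.coeff ((n + r) - (i : ℕ))
      (ser r1 (fun k => γ (n - k)) * Bser n r ^ (q1 + 1)) ∈ Ide n r hr hrn d (q1 * r) from h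
  obtain ⟨q, rfl⟩ : ∃ q, q1 = q + 1 := ⟨q1 - 1, by omega⟩
  have hqr : (q + 1) * r = q * r + r := by ring
  set J : Ideal (R n r) := Ide n r hr hrn d ((q + 1) * r) with hJ
  set π : R n r →+* R n r ⧸ J := Ideal.Quotient.mk J with hπ
  set πS : PowerSeries (R n r) →+* PowerSeries (R n r ⧸ J) := PowerSeries.map π with hπS
  have coeffmap : ∀ (F : PowerSeries (R n r)) (k : ℕ),
      π (PowerSeries.coeff k F) = PowerSeries.coeff k (πS F) := by
    intro F k
    rw [hπS, PowerSeries.coeff_map]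
  have hmem0 : ∀ x : R n r, x ∈ J → π x = 0 := fun x hx =>
    Ideal.Quotient.eq_zero_iff_mem.2 hx
  -- π(A) = π(B)·π(D)
  have hAD : πS (Aser n r) = πS (Bser n r) * πS (Dser n r d) := by
    refine PowerSeries.ext fun k => ?_
    rw [← _root_.map_mul, ← coeffmap, ← coeffmap]
    by_cases hk : k ≤ n
    · rw [hd k hk]
    · rw [coeff_Aser_high (by omega), map_zero]
      exact (hmem0 _ (Ide_mono hr hrn (by omega)
        (BD_high_mem hr hrn d k (by omega)))).symm
  have hBB : πS (Bser n r) * πS Binv = 1 := by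
    rw [← _root_.map_mul, hBinv, _root_.map_one]
  have hccB : PowerSeries.constantCoeff Binv = 1 := by
    have h := congrArg (PowerSeries.constantCoeff) hBinv
    rwa [_root_.map_mul, constantCoeff_Bser, one_mul, _root_.map_one] at h
  -- π(ser γ) = π(Binv)^q · π(D)
  have hser : πS (ser r1 fun k => γ (n - k)) = (πS Binv) ^ q * πS (Dser n r d) := by
    refine PowerSeries.ext fun k => ?_
    rw [← coeffmap]
    rcases eq_or_ne k 0 with rfl | hk0
    · have c1 : PowerSeries.constantCoeff (πS Binv) = 1 := by
        rw [← PowerSeries.coeff_zero_eq_constantCoeff, ← coeffmap,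
          PowerSeries.coeff_zero_eq_constantCoeff, hccB, _root_.map_one]
      have c2 : PowerSeries.constantCoeff (πS (Dser n r d)) = 1 := by
        rw [← PowerSeries.coeff_zero_eq_constantCoeff, ← coeffmap,
          PowerSeries.coeff_zero_eq_constantCoeff, constantCoeff_Dser, _root_.map_one]
      rw [coeff_ser, if_pos rfl, PowerSeries.coeff_zero_eq_constantCoeff, _root_.map_mul,
        _root_.map_pow, c1, c2, one_pow, one_mul, _root_.map_one]
    by_cases hk : k ≤ r1
    · rw [coeff_ser, if_neg hk0, if_pos hk, hγ k (by omega) hk, coeffmap, _root_.map_mul,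
        _root_.map_pow]
      have hq : (πS Binv) ^ (q + 1) * πS (Aser n r) = (πS Binv) ^ q * πS (Dser n r d) := by
        rw [hAD, pow_succ]
        linear_combination ((πS Binv) ^ q * πS (Dser n r d)) * hBB
      rw [hq]
    · rw [coeff_ser, if_neg hk0, if_neg hk]
      have hk2 := keyC hr hrn d hd Binv hBinv q k (by omega)
      have hps : (πS Binv) ^ q * πS (Dser n r d) = πS (Binv ^ q * Dser n r d) := by
        rw [_root_.map_mul, _root_.map_pow]
      rw [map_zero, hps, ← coeffmap, hmem0 _ hk2]
  -- main series identity
  have hone : (πS Binv) ^ q * (πS (Bser n r)) ^ q = 1 := by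
    rw [← mul_pow, mul_comm (πS Binv) (πS (Bser n r)), hBB, one_pow]
  have hfinal : πS (Aser n r * Bser n r)
      = πS (ser r1 (fun k => γ (n - k)) * Bser n r ^ (q + 1 + 1)) := by
    rw [_root_.map_mul, _root_.map_mul, _root_.map_pow, hAD, hser]
    linear_combination (- (πS (Dser n r d) * (πS (Bser n r)) ^ 2)) * hone
  rw [← Ideal.Quotient.eq_zero_iff_mem, map_sub, sub_eq_zero, cc_eq i]
  show π _ = π _
  rw [coeffmap, coeffmap, hfinal]

end TB
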